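/- For the mirror model with mirror density γ ∈ (0,1), for all times t with t < min(τ, N), the variance with respect to Q of b₁(t) satisfies Var_Q[b₁(t)] ≤ 1/(4N) + t/(2N). -/

import Mathlib

/-!
Common setup for the mirror model of Lefevere–Sasa:
non-interacting particles on three vertical rings `R₁, R₂, R₃`
(columns `0,1,2` of `Fin 3`, vertical coordinate in `Fin R`, periodic),
with velocities `±e₊, ±e₋` and random mirrors on the internal walls.
-/

namespace Mirror

/-- The four velocities: `pe = e₊`, `me = -e₊`, `pm = e₋`, `mm = -e₋`. -/
inductive Vel : Type
  | pe | me | pm | mm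
  deriving DecidableEq

instance instFintypeVel : Fintype Vel :=
  ⟨{.pe, .me, .pm, .mm}, fun x => by cases x <;> simp⟩

/-- Whether the velocity has a positive horizontal component. -/
def Vel.right : Vel → Bool
  | .pe => true
  | .pm => true
  | _ => false

/-- Positions: column in `{1,2,3}` (encoded `Fin 3`) and vertical coordinate mod `R`. -/
abbrev Pos (R : ℕ) := Fin 3 × Fin R

/-- Single-particle states: position and velocity. -/
abbrev State (R : ℕ) := Pos R × Vel

/-- A mirror configuration: walls are indexed by `Fin 4`
(`0` = left outer wall, `1` = wall between `R₁,R₂`, `2` = wall between `R₂,R₃`,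
`3` = right outer wall) and by the vertical coordinate of the shifted site. -/
abbrev Config (R : ℕ) := Fin 4 → Fin R → Bool

/-- Configurations of the internal walls `S` (walls `1` and `2`). -/
abbrev IConfig (R : ℕ) := Fin 2 → Fin R → Bool

/-- Vertical successor (mod `R`). -/
def fsucc {R : ℕ} (k : Fin R) : Fin R :=
  ⟨(k.1 + 1) % R, Nat.mod_lt _ (Nat.lt_of_le_of_lt (Nat.zero_le _) k.isLt)⟩

/-- Vertical predecessor (mod `R`). -/
def fpred {R : ℕ} (k : Fin R) : Fin R :=
  ⟨(k.1 + (R - 1)) % R, Nat.mod_lt _ (Nat.lt_of_le_of_lt (Nat.zero_le _) k.isLt)⟩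

/-- Vertical coordinate of the shifted mirror site `q + p` encountered by a
particle at vertical coordinate `k` with velocity `p`. -/
def site {R : ℕ} (k : Fin R) : Vel → Fin R
  | .pe => k
  | .mm => k
  | .pm => fpred k
  | .me => fpred k

/-- Index of the wall on which the mirror site `q + p` lies. -/
def wall (i : Fin 3) (p : Vel) : Fin 4 :=
  if p.right then ⟨i.1 + 1, by have := i.isLt; omega⟩
  else ⟨i.1, by have := i.isLt; omega⟩

/-- One step of the single-particle mirror dynamics
`F_ξ(q,p) = (q + p + π_{ξ(q+p)}(p), π_{ξ(q+p)}(p))`. -/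
def step {R : ℕ} (ξ : Config R) : State R → State R :=
  fun x =>
    match x with
    | ((i, k), p) =>
      if ξ (wall i p) (site k p) then
        -- a mirror is present: the velocity is reflected, `p ↦ p̄`
        match p with
        | .pe => ((i, fsucc k), .mm)
        | .me => ((i, fpred k), .pm)
        | .pm => ((i, fpred k), .me)
        | .mm => ((i, fsucc k), .pe)
      else
        -- no mirror: the particle moves by `2p`
        match p with
        | .pe => ((i + 1, fsucc k), .pe)
        | .me => ((i - 1, fpred k), .me)
        | .pm => ((i + 1, fpred k), .pm)
        | .mm => ((i - 1, fsucc k), .mm)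

/-- The iterated dynamics `F_ξ(·,t)`. -/
def iter {R : ℕ} (ξ : Config R) (t : ℕ) : State R → State R := (step ξ)^[t]

/-- The configuration before the switching time: random mirrors `σ` on the wall
between `R₁` and `R₂`, full mirrors (closed wall) between `R₂` and `R₃`,
full mirrors on the outer walls. -/
def xi1 {R : ℕ} (σ : IConfig R) : Config R :=
  fun j k => if j.1 = 1 then σ 0 k else true

/-- The configuration after the switching time: random mirrors `σ` on both
internal walls, full mirrors on the outer walls. -/
def xi2 {R : ℕ} (σ : IConfig R) : Config R :=
  fun j k => if j.1 = 1 then σ 0 k else if j.1 = 2 then σ 1 k else true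

/-- The concatenated single-particle dynamics `F̃(·,t)`: `F¹` up to time `τ`,
then `F²`. -/
def Ftilde {R : ℕ} (σ : IConfig R) (τ t : ℕ) : State R → State R :=
  if t ≤ τ then iter (xi1 σ) t
  else (iter (xi2 σ) (t - τ)) ∘ (iter (xi1 σ) τ)

/-- The ring (column) on which a state sits. -/
def ring {R : ℕ} (x : State R) : Fin 3 := x.1.1

/-- Bernoulli(γ) product weight of an internal mirror configuration:
the density of the i.i.d. law `Q` of the mirrors. -/
noncomputable def wt (R : ℕ) (γ : ℝ) (σ : IConfig R) : ℝ :=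
  ∏ s : Fin 2 × Fin R, (if σ s.1 s.2 then γ else 1 - γ)

open Classical in
/-- `Q`-probability of an event on mirror configurations. -/
noncomputable def Qprob (R : ℕ) (γ : ℝ) (E : IConfig R → Prop) : ℝ :=
  ∑ σ : IConfig R, if E σ then wt R γ σ else 0

/-- `Q`-expectation of a function of the mirror configuration. -/
noncomputable def Qexp (R : ℕ) (γ : ℝ) (f : IConfig R → ℝ) : ℝ :=
  ∑ σ : IConfig R, wt R γ σ * f σ

/-- `Q`-variance. -/
noncomputable def Qvar (R : ℕ) (γ : ℝ) (f : IConfig R → ℝ) : ℝ :=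
  Qexp R γ (fun σ => (f σ - Qexp R γ f) ^ 2)

/-- `b₁(t)` for a given mirror configuration `σ`: the probability that a single
particle, started uniformly on ring `R₁`, is on ring `R₁` at time `t` under `F¹`. -/
noncomputable def b1 (R : ℕ) (σ : IConfig R) (t : ℕ) : ℝ :=
  (1 / (4 * (R : ℝ))) *
    ∑ x : State R, (if ring x = 0 ∧ ring (iter (xi1 σ) t x) = 0 then 1 else 0)

/-- Single-particle density of the initial Gibbs measure `ρ₀`
(uniform on `R₁ × P`). -/
noncomputable def rho0 (R : ℕ) : State R → ℝ :=
  fun x => if ring x = 0 then 1 / (4 * (R : ℝ)) else 0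

/-- Single-particle density of the Gibbs measure `ρ₁`
(uniform on `(R₁ ∪ R₂) × P`). -/
noncomputable def rho1 (R : ℕ) : State R → ℝ :=
  fun x => if ring x ≠ 2 then 1 / (8 * (R : ℝ)) else 0

/-- Single-particle density of the Gibbs measure `ρ^m` with ring densities `m`:
`ρ̂^m(q,p) = (1/(4R)) Σᵢ mⁱ 1_{Rᵢ}(q)`. -/
noncomputable def rhoM (R : ℕ) (m : Fin 3 → ℝ) : State R → ℝ :=
  fun x => (1 / (4 * (R : ℝ))) * m (ring x)

/-- The macroscopic observable `φ_N^i` (density of particles on ring `i`),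
for an `N = R` particle configuration. -/
noncomputable def phi (R : ℕ) (i : Fin 3) (x : Fin R → State R) : ℝ :=
  (1 / (R : ℝ)) * ∑ j, (if ring (x j) = i then 1 else 0)

/-- The cumulant generating function
`ψ_N(μ, η₁, η₂, U_t) = (1/N) log ⟨exp(N(η₁ φ_N¹ + η₂ φ_N²))(U_t(x))⟩_μ`,
where `μ` is the product of the single-particle density `μ̂` and the evolution
is the product of the single-particle map `F` (here `N = R`). -/
noncomputable def psi (R : ℕ) (μ : State R → ℝ) (η₁ η₂ : ℝ)
    (F : State R → State R) : ℝ :=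
  (1 / (R : ℝ)) * Real.log (∑ x : Fin R → State R,
    (∏ j, μ (x j)) *
      Real.exp ((R : ℝ) * (η₁ * phi R 0 (fun j => F (x j)) +
        η₂ * phi R 1 (fun j => F (x j)))))

/-- First component of `m_N = ∇_η ψ_N`. -/
noncomputable def mN1 (R : ℕ) (μ : State R → ℝ) (η₁ η₂ : ℝ)
    (F : State R → State R) : ℝ :=
  deriv (fun a => psi R μ a η₂ F) η₁

/-- Second component of `m_N = ∇_η ψ_N`. -/
noncomputable def mN2 (R : ℕ) (μ : State R → ℝ) (η₁ η₂ : ℝ)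
    (F : State R → State R) : ℝ :=
  deriv (fun b => psi R μ η₁ b F) η₂

/-- Expected density on ring `i` at the (single-particle) evolution `F`,
starting from the single-particle Gibbs measure with ring densities `m`:
`b_i = ⟨1_{R_i}(F(·))⟩_{ρ̂^m}`. -/
noncomputable def bm (R : ℕ) (m : Fin 3 → ℝ) (F : State R → State R)
    (i : Fin 3) : ℝ :=
  ∑ x : State R, rhoM R m x * (if ring (F x) = i then 1 else 0)

/-- Vertical translation by one site. -/
def vshift {R : ℕ} (x : State R) : State R := ((x.1.1, fsucc x.1.2), x.2)

/-- The averaged one-step transition kernel `K(x;x') = Q[F¹(x') = x]`. -/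
noncomputable def kern (R : ℕ) (γ : ℝ) (x x' : State R) : ℝ :=
  ∑ σ : IConfig R, wt R γ σ * (if step (xi1 σ) x' = x then 1 else 0)

end Mirror

namespace Mirror

set_option linter.dupNamespace false

variable {R : ℕ}

lemma fsucc_fpred (k : Fin R) : fsucc (fpred k) = k := by
  have hR : 0 < R := k.pos
  apply Fin.ext
  simp only [fsucc, fpred, Nat.mod_add_mod]
  have : k.1 + (R - 1) + 1 = k.1 + R := by omega
  rw [this, Nat.add_mod_right, Nat.mod_eq_of_lt k.isLt]

lemma fpred_fsucc (k : Fin R) : fpred (fsucc k) = k := by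
  have hR : 0 < R := k.pos
  apply Fin.ext
  simp only [fsucc, fpred, Nat.mod_add_mod]
  have : k.1 + 1 + (R - 1) = k.1 + R := by omega
  rw [this, Nat.add_mod_right, Nat.mod_eq_of_lt k.isLt]

lemma fsucc_fpred_iter (m : ℕ) (k : Fin R) : fsucc^[m] (fpred^[m] k) = k :=
  (Function.LeftInverse.iterate fsucc_fpred m) k

lemma fpred_fsucc_iter (m : ℕ) (k : Fin R) : fpred^[m] (fsucc^[m] k) = k :=
  (Function.LeftInverse.iterate fpred_fsucc m) k

lemma comm_iter (s s' : ℕ) (k : Fin R) :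
    fsucc^[s] (fpred^[s'] k) = fpred^[s'] (fsucc^[s] k) := by
  have hc : Function.Commute (fsucc (R := R)) fpred := by
    intro k; rw [fsucc_fpred, fpred_fsucc]
  exact (hc.iterate_iterate s s') k

lemma succ_pred_cancel (a b : ℕ) (k : Fin R) :
    fsucc^[a + 1] (fpred^[b + 1] k) = fsucc^[a] (fpred^[b] k) := by
  rw [Function.iterate_succ_apply, Function.iterate_succ_apply' (f := fpred),
    fsucc_fpred]

lemma shift_base (a b m : ℕ) (hb : b ≤ m) (k : Fin R) :
    fsucc^[a] (fpred^[b] k) = fsucc^[a + (m - b)] (fpred^[m] k) := by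
  obtain ⟨c, rfl⟩ : ∃ c, m = c + b := ⟨m - b, by omega⟩
  rw [Nat.add_sub_cancel, Function.iterate_add_apply fpred c b k,
    Function.iterate_add_apply fsucc a c _, fsucc_fpred_iter]

/-- Direction of a velocity: `true` if the vertical motion is upwards. -/
def up : Vel → Bool
  | .pe => true
  | .mm => true
  | _ => false

/-- The wall-1 site queried by the trajectory of `x` at step `s`. -/
def wfun (x : State R) (s : ℕ) : Fin R :=
  if up x.2 then fsucc^[s] x.1.2 else fpred^[s + 1] x.1.2

lemma wfun_step (ξ : Config R) (x : State R) (s : ℕ) :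
    wfun (step ξ x) s = wfun x (s + 1) := by
  obtain ⟨⟨i, k⟩, p⟩ := x
  cases p <;> simp only [step] <;> split <;>
    simp [wfun, up, Function.iterate_succ_apply]

lemma step_congr (σ σ' : IConfig R) (x : State R)
    (h : σ 0 (wfun x 0) = σ' 0 (wfun x 0)) :
    step (xi1 σ) x = step (xi1 σ') x := by
  obtain ⟨⟨i, k⟩, p⟩ := x
  have hcond : xi1 σ (wall i p) (site k p) = xi1 σ' (wall i p) (site k p) := by
    unfold xi1
    split
    · cases p <;> simpa [wfun, up, site] using h
    · rfl
  simp only [step, hcond]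

lemma iter_congr (σ σ' : IConfig R) :
    ∀ (t : ℕ) (x : State R), (∀ s < t, σ 0 (wfun x s) = σ' 0 (wfun x s)) →
      iter (xi1 σ) t x = iter (xi1 σ') t x := by
  intro t
  induction t with
  | zero => intro x _; rfl
  | succ n ih =>
    intro x h
    have h0 : step (xi1 σ) x = step (xi1 σ') x :=
      step_congr σ σ' x (h 0 (Nat.succ_pos n))
    show (step (xi1 σ))^[n + 1] x = (step (xi1 σ'))^[n + 1] x
    rw [Function.iterate_succ_apply, Function.iterate_succ_apply, h0]
    have := ih (step (xi1 σ') x) (fun s hs => by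
      rw [wfun_step]; exact h (s + 1) (by omega))
    exact this

variable {R : ℕ}

/-- The window of wall-1 sites explored by the trajectory of `x` up to time `t`. -/
def win (x : State R) (t : ℕ) : Finset (Fin R) :=
  (Finset.range t).image (wfun x)

/-- A set of at most `2t` vertical coordinates containing all starting heights
whose window can overlap that of `x` (for a given direction `d'`). -/
def Sset (x : State R) (t : ℕ) (d' : Bool) : Finset (Fin R) :=
  (Finset.range (2 * t)).image (fun a =>
    if up x.2 then (if d' then fsucc^[a] (fpred^[t - 1] x.1.2) else fsucc^[a] x.1.2)
    else (if d' then fpred^[a] x.1.2 else fsucc^[a] (fpred^[t - 1] x.1.2)))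

lemma Sset_card (x : State R) (t : ℕ) (d' : Bool) : (Sset x t d').card ≤ 2 * t :=
  le_trans (Finset.card_image_le) (by simp)

lemma overlap_mem (t : ℕ) (x x' : State R)
    (h : ¬ Disjoint (win x t) (win x' t)) : x'.1.2 ∈ Sset x t (up x'.2) := by
  obtain ⟨u, hu, hu'⟩ := Finset.not_disjoint_iff.1 h
  obtain ⟨s, hs, hws⟩ := Finset.mem_image.1 hu
  obtain ⟨s', hs', hws'⟩ := Finset.mem_image.1 hu'
  rw [Finset.mem_range] at hs hs'
  have heq : wfun x s = wfun x' s' := by rw [hws, hws']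
  unfold wfun at heq
  rcases hx : up x.2 with _ | _ <;> rcases hx' : up x'.2 with _ | _ <;>
    rw [hx, hx'] at heq <;> simp only [if_true, if_false, Bool.false_eq_true] at heq <;>
    unfold Sset <;> rw [hx] <;> simp only [if_true, if_false, Bool.false_eq_true] <;>
    rw [Finset.mem_image]
  · -- down-down
    refine ⟨s' + (t - 1 - s), Finset.mem_range.2 (by omega), ?_⟩
    have h1 : x'.1.2 = fsucc^[s' + 1] (fpred^[s + 1] x.1.2) := by
      rw [heq, fsucc_fpred_iter]
    rw [h1, succ_pred_cancel, shift_base s' s (t-1) (by omega) x.1.2]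
  · -- down-up
    refine ⟨s + 1 + s', Finset.mem_range.2 (by omega), ?_⟩
    have h1 : x'.1.2 = fpred^[s'] (fpred^[s + 1] x.1.2) := by
      rw [heq, fpred_fsucc_iter]
    rw [h1, ← Function.iterate_add_apply, Nat.add_comm s' (s + 1)]
  · -- up-down
    refine ⟨s' + 1 + s, Finset.mem_range.2 (by omega), ?_⟩
    have h1 : x'.1.2 = fsucc^[s' + 1] (fsucc^[s] x.1.2) := by
      rw [heq, fsucc_fpred_iter]
    rw [h1, ← Function.iterate_add_apply]
  · -- up-up
    refine ⟨s + (t - 1 - s'), Finset.mem_range.2 (by omega), ?_⟩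
    have h1 : x'.1.2 = fpred^[s'] (fsucc^[s] x.1.2) := by
      rw [heq, fpred_fsucc_iter]
    rw [h1, ← comm_iter, shift_base s s' (t-1) (by omega) x.1.2]

variable {R : ℕ} {γ : ℝ}

lemma wt_nonneg (hγ0 : 0 ≤ γ) (hγ1 : γ ≤ 1) (σ : IConfig R) : 0 ≤ wt R γ σ :=
  Finset.prod_nonneg (fun s _ => by split <;> linarith)

lemma sum_wt : ∑ σ : IConfig R, wt R γ σ = 1 := by
  have h1 : ∑ τ : (Fin 2 × Fin R → Bool), ∏ s : Fin 2 × Fin R,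
      (if τ s then γ else 1 - γ) = 1 := by
    rw [← Fintype.prod_sum (fun (_ : Fin 2 × Fin R) (b : Bool) =>
      if b then γ else 1 - γ)]
    simp
  rw [← h1]
  exact Fintype.sum_equiv (Equiv.curry (Fin 2) (Fin R) Bool).symm
    (fun σ : IConfig R => wt R γ σ)
    (fun τ => ∏ s : Fin 2 × Fin R, (if τ s then γ else 1 - γ))
    (fun σ => rfl)

lemma Qexp_const (c : ℝ) : Qexp R γ (fun _ => c) = c := by
  unfold Qexp
  rw [← Finset.sum_mul, sum_wt, one_mul]

lemma Qexp_mono (hγ0 : 0 ≤ γ) (hγ1 : γ ≤ 1) {f g : IConfig R → ℝ}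
    (h : ∀ σ, f σ ≤ g σ) : Qexp R γ f ≤ Qexp R γ g :=
  Finset.sum_le_sum (fun σ _ =>
    mul_le_mul_of_nonneg_left (h σ) (wt_nonneg hγ0 hγ1 σ))

/-- Combination of two configurations along a set `A` of coordinates. -/
def cmb (A : Finset (Fin 2 × Fin R)) (a b : IConfig R) : IConfig R :=
  fun i k => if (i, k) ∈ A then a i k else b i k

lemma wt_cmb (A : Finset (Fin 2 × Fin R)) (a b : IConfig R) :
    wt R γ (cmb A a b) * wt R γ (cmb A b a) = wt R γ a * wt R γ b := by
  unfold wt cmb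
  rw [← Finset.prod_mul_distrib, ← Finset.prod_mul_distrib]
  refine Finset.prod_congr rfl (fun s _ => ?_)
  by_cases h : (s.1, s.2) ∈ A
  · simp only [if_pos h]
  · simp only [if_neg h]; ring

/-- Independence: if `f` depends only on coordinates in `A` and `g` only on
coordinates outside `A`, then they are uncorrelated under `Q`. -/
lemma Qexp_indep (A : Finset (Fin 2 × Fin R)) (f g : IConfig R → ℝ)
    (hf : ∀ a b : IConfig R, (∀ s ∈ A, a s.1 s.2 = b s.1 s.2) → f a = f b)
    (hg : ∀ a b : IConfig R, (∀ s ∉ A, a s.1 s.2 = b s.1 s.2) → g a = g b) :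
    Qexp R γ (fun σ => f σ * g σ) = Qexp R γ f * Qexp R γ g := by
  have key : ∀ a b : IConfig R,
      cmb A (cmb A a b) (cmb A b a) = a ∧ cmb A (cmb A b a) (cmb A a b) = b := by
    intro a b
    constructor <;> (funext i k; unfold cmb; by_cases h : (i, k) ∈ A <;> simp [h])
  symm
  calc Qexp R γ f * Qexp R γ g
      = ∑ p : IConfig R × IConfig R,
          (wt R γ p.1 * f p.1) * (wt R γ p.2 * g p.2) := by
        rw [Qexp, Qexp, Finset.sum_mul_sum, Fintype.sum_prod_type]
    _ = ∑ p : IConfig R × IConfig R,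
          (wt R γ p.1 * (f p.1 * g p.1)) * wt R γ p.2 := by
        refine Fintype.sum_equiv
          ⟨fun p => (cmb A p.1 p.2, cmb A p.2 p.1),
           fun p => (cmb A p.1 p.2, cmb A p.2 p.1),
           fun p => Prod.ext (key p.1 p.2).1 (key p.1 p.2).2,
           fun p => Prod.ext (key p.1 p.2).1 (key p.1 p.2).2⟩ _ _ (fun p => ?_)
        simp only [Equiv.coe_fn_mk]
        have hfe : f (cmb A p.1 p.2) = f p.1 :=
          hf _ _ (fun s hs => by unfold cmb; simp [hs])
        have hge : g (cmb A p.1 p.2) = g p.2 :=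
          hg _ _ (fun s hs => by unfold cmb; simp [hs])
        have hwe := wt_cmb (γ := γ) A p.1 p.2
        rw [hfe, hge]
        linear_combination (-(f p.1 * g p.2)) * hwe
    _ = Qexp R γ (fun σ => f σ * g σ) * ∑ σ : IConfig R, wt R γ σ := by
        rw [Qexp, Finset.sum_mul_sum, Fintype.sum_prod_type]
    _ = Qexp R γ (fun σ => f σ * g σ) := by rw [sum_wt, mul_one]

variable {R : ℕ} {γ : ℝ}

/-- The indicator that a particle started at `x` on ring `1` is on ring `1`
at time `t`. -/
noncomputable def Ifun (R t : ℕ) (x : State R) (σ : IConfig R) : ℝ :=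
  if ring x = 0 ∧ ring (iter (xi1 σ) t x) = 0 then 1 else 0

/-- Its `Q`-expectation. -/
noncomputable def pI (R : ℕ) (γ : ℝ) (t : ℕ) (x : State R) : ℝ :=
  Qexp R γ (Ifun R t x)

lemma Ifun_sq (t : ℕ) (x : State R) (σ : IConfig R) :
    Ifun R t x σ * Ifun R t x σ = Ifun R t x σ := by
  unfold Ifun; split <;> norm_num

lemma Qexp_sub_const (f : IConfig R → ℝ) (c : ℝ) :
    Qexp R γ (fun σ => f σ - c) = Qexp R γ f - c := by
  unfold Qexp
  simp only [mul_sub]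
  rw [Finset.sum_sub_distrib, ← Finset.sum_mul, sum_wt, one_mul]

lemma Qexp_add (f g : IConfig R → ℝ) :
    Qexp R γ (fun σ => f σ + g σ) = Qexp R γ f + Qexp R γ g := by
  unfold Qexp
  simp only [mul_add]
  exact Finset.sum_add_distrib

lemma Qexp_smul (c : ℝ) (f : IConfig R → ℝ) :
    Qexp R γ (fun σ => c * f σ) = c * Qexp R γ f := by
  unfold Qexp
  rw [Finset.mul_sum]
  exact Finset.sum_congr rfl (fun σ _ => by ring)

lemma Qexp_sum {ι : Type*} (s : Finset ι) (f : ι → IConfig R → ℝ) :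
    Qexp R γ (fun σ => ∑ i ∈ s, f i σ) = ∑ i ∈ s, Qexp R γ (f i) := by
  unfold Qexp
  simp only [Finset.mul_sum]
  exact Finset.sum_comm

lemma Qexp_dev_zero (t : ℕ) (x : State R) :
    Qexp R γ (fun σ => Ifun R t x σ - pI R γ t x) = 0 := by
  rw [Qexp_sub_const, pI, sub_self]

lemma Qexp_dev_sq_le (hγ0 : 0 ≤ γ) (hγ1 : γ ≤ 1) (t : ℕ) (x : State R) :
    Qexp R γ (fun σ => (Ifun R t x σ - pI R γ t x) ^ 2) ≤ 1 / 4 := by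
  set p := pI R γ t x with hp
  have hexp : Qexp R γ (fun σ => (Ifun R t x σ - p) ^ 2) = p - p ^ 2 := by
    have h1 : Qexp R γ (fun σ => (Ifun R t x σ - p) ^ 2)
        = ∑ σ : IConfig R, (wt R γ σ * Ifun R t x σ * (1 - 2 * p)
            + p ^ 2 * wt R γ σ) := by
      unfold Qexp
      refine Finset.sum_congr rfl (fun σ _ => ?_)
      linear_combination (wt R γ σ) * Ifun_sq t x σ
    rw [h1, Finset.sum_add_distrib, ← Finset.sum_mul, ← Finset.mul_sum, sum_wt]
    have : (∑ σ : IConfig R, wt R γ σ * Ifun R t x σ) = p := rfl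
    rw [this]
    ring
  rw [hexp]
  nlinarith [sq_nonneg (p - 1 / 2)]

lemma cov_le (hγ0 : 0 ≤ γ) (hγ1 : γ ≤ 1) (t : ℕ) (x x' : State R) :
    Qexp R γ (fun σ => (Ifun R t x σ - pI R γ t x) *
      (Ifun R t x' σ - pI R γ t x')) ≤ 1 / 4 := by
  have hmono : Qexp R γ (fun σ => (Ifun R t x σ - pI R γ t x) *
      (Ifun R t x' σ - pI R γ t x'))
      ≤ Qexp R γ (fun σ => (1 / 2) * ((Ifun R t x σ - pI R γ t x) ^ 2
          + (Ifun R t x' σ - pI R γ t x') ^ 2)) := by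
    refine Qexp_mono hγ0 hγ1 (fun σ => ?_)
    nlinarith [sq_nonneg ((Ifun R t x σ - pI R γ t x) - (Ifun R t x' σ - pI R γ t x'))]
  refine le_trans hmono ?_
  rw [Qexp_smul, Qexp_add]
  have h1 := Qexp_dev_sq_le (R := R) (γ := γ) hγ0 hγ1 t x
  have h2 := Qexp_dev_sq_le (R := R) (γ := γ) hγ0 hγ1 t x'
  linarith

lemma Ifun_zero_of_ring (t : ℕ) (x : State R) (hx : ¬ ring x = 0) (σ : IConfig R) :
    Ifun R t x σ = 0 := by
  unfold Ifun
  rw [if_neg]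
  tauto

lemma cov_zero_of_ring_left (t : ℕ) (x x' : State R) (hx : ¬ ring x = 0) :
    Qexp R γ (fun σ => (Ifun R t x σ - pI R γ t x) *
      (Ifun R t x' σ - pI R γ t x')) = 0 := by
  have hp : pI R γ t x = 0 := by
    have : Ifun R t x = fun _ => (0 : ℝ) := funext (Ifun_zero_of_ring t x hx)
    rw [pI, this, Qexp_const]
  have : (fun σ => (Ifun R t x σ - pI R γ t x) * (Ifun R t x' σ - pI R γ t x'))
      = fun _ => (0 : ℝ) := by
    funext σ
    rw [Ifun_zero_of_ring t x hx σ, hp]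
    ring
  rw [this, Qexp_const]

lemma cov_zero_of_ring_right (t : ℕ) (x x' : State R) (hx : ¬ ring x' = 0) :
    Qexp R γ (fun σ => (Ifun R t x σ - pI R γ t x) *
      (Ifun R t x' σ - pI R γ t x')) = 0 := by
  have hp : pI R γ t x' = 0 := by
    have : Ifun R t x' = fun _ => (0 : ℝ) := funext (Ifun_zero_of_ring t x' hx)
    rw [pI, this, Qexp_const]
  have : (fun σ => (Ifun R t x σ - pI R γ t x) * (Ifun R t x' σ - pI R γ t x'))
      = fun _ => (0 : ℝ) := by
    funext σ
    rw [Ifun_zero_of_ring t x' hx σ, hp]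
    ring
  rw [this, Qexp_const]

lemma Ifun_congr (t : ℕ) (x : State R) (a b : IConfig R)
    (h : ∀ s < t, a 0 (wfun x s) = b 0 (wfun x s)) :
    Ifun R t x a = Ifun R t x b := by
  unfold Ifun
  rw [iter_congr a b t x h]

lemma cov_zero_of_disjoint (t : ℕ) (x x' : State R)
    (hd : Disjoint (win x t) (win x' t)) :
    Qexp R γ (fun σ => (Ifun R t x σ - pI R γ t x) *
      (Ifun R t x' σ - pI R γ t x')) = 0 := by
  set A : Finset (Fin 2 × Fin R) :=
    (win x t).image (fun k => ((0 : Fin 2), k)) with hA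
  have hf : ∀ a b : IConfig R, (∀ s ∈ A, a s.1 s.2 = b s.1 s.2) →
      (Ifun R t x a - pI R γ t x) = (Ifun R t x b - pI R γ t x) := by
    intro a b hab
    rw [Ifun_congr t x a b (fun s hs => by
      have hmem : ((0 : Fin 2), wfun x s) ∈ A := by
        rw [hA]
        exact Finset.mem_image.2 ⟨wfun x s,
          Finset.mem_image.2 ⟨s, Finset.mem_range.2 hs, rfl⟩, rfl⟩
      exact hab _ hmem)]
  have hg : ∀ a b : IConfig R, (∀ s ∉ A, a s.1 s.2 = b s.1 s.2) →
      (Ifun R t x' a - pI R γ t x') = (Ifun R t x' b - pI R γ t x') := by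
    intro a b hab
    rw [Ifun_congr t x' a b (fun s hs => by
      have hnmem : ((0 : Fin 2), wfun x' s) ∉ A := by
        rw [hA]
        intro hmem
        obtain ⟨k, hk, hke⟩ := Finset.mem_image.1 hmem
        have : k = wfun x' s := congrArg Prod.snd hke
        subst this
        exact (Finset.disjoint_left.1 hd hk)
          (Finset.mem_image.2 ⟨s, Finset.mem_range.2 hs, rfl⟩)
      exact hab _ hnmem)]
  rw [Qexp_indep A _ _ hf hg, Qexp_dev_zero, Qexp_dev_zero, mul_zero]

variable {R : ℕ} {γ : ℝ}

lemma count_le (t : ℕ) (x : State R) :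
    (∑ x' : State R, if ring x' = 0 ∧ x'.1.2 ∈ Sset x t (up x'.2)
      then (1/4 : ℝ) else 0) ≤ 2 * t := by
  calc (∑ x' : State R, if ring x' = 0 ∧ x'.1.2 ∈ Sset x t (up x'.2)
        then (1/4 : ℝ) else 0)
      = ∑ i : Fin 3, ∑ k : Fin R, ∑ v : Vel,
          ((if i = 0 then (1:ℝ) else 0) *
            (if k ∈ Sset x t (up v) then (1/4 : ℝ) else 0)) := by
        rw [Fintype.sum_prod_type, Fintype.sum_prod_type]
        refine Finset.sum_congr rfl fun i _ => Finset.sum_congr rfl fun k _ =>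
          Finset.sum_congr rfl fun v _ => ?_
        by_cases h1 : i = 0 <;> by_cases h2 : k ∈ Sset x t (up v) <;>
          simp [ring, h1, h2]
    _ = (∑ i : Fin 3, (if i = 0 then (1:ℝ) else 0)) *
          (∑ k : Fin R, ∑ v : Vel, (if k ∈ Sset x t (up v) then (1/4:ℝ) else 0)) := by
        rw [Finset.sum_mul]
        refine Finset.sum_congr rfl fun i _ => ?_
        rw [Finset.mul_sum]
        exact Finset.sum_congr rfl fun k _ => (Finset.mul_sum _ _ _).symm
    _ = ∑ v : Vel, ∑ k : Fin R, (if k ∈ Sset x t (up v) then (1/4:ℝ) else 0) := by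
        rw [Finset.sum_comm]
        simp
    _ = ∑ v : Vel, ((Sset x t (up v)).card : ℝ) * (1/4) := by
        refine Finset.sum_congr rfl fun v _ => ?_
        rw [Finset.sum_ite_mem, Finset.univ_inter, Finset.sum_const,
          nsmul_eq_mul]
    _ ≤ ∑ v : Vel, (2*t : ℝ) * (1/4) := by
        refine Finset.sum_le_sum fun v _ => ?_
        have := Sset_card x t (up v)
        have h : ((Sset x t (up v)).card : ℝ) ≤ (2*t : ℝ) := by exact_mod_cast this
        linarith
    _ = 2 * t := by
        rw [Finset.sum_const]
        have : (Finset.univ : Finset Vel).card = 4 := by decide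
        rw [this]
        push_cast
        ring

/-- variance bound, eq. (37) of the paper.
For `γ ∈ (0,1)` and all `t < min(τ, N)`,
`Var_Q[b₁(t)] ≤ 1/(4N) + t/(2N)`. -/
theorem variance_b1 (γ : ℝ) (hγ : γ ∈ Set.Ioo (0 : ℝ) 1) (τ N t : ℕ)
    (ht : t < min τ N) :
    Qvar N γ (fun σ => b1 N σ t) ≤ 1 / (4 * (N : ℝ)) + (t : ℝ) / (2 * (N : ℝ)) := by
  have hγ0 : 0 ≤ γ := le_of_lt hγ.1
  have hγ1 : γ ≤ 1 := le_of_lt hγ.2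
  have hNt : t < N := lt_of_lt_of_le ht (min_le_right τ N)
  have hN : 0 < N := Nat.lt_of_le_of_lt (Nat.zero_le t) hNt
  have hNR : (0:ℝ) < (N:ℝ) := by exact_mod_cast hN
  set c : ℝ := 1 / (4 * (N:ℝ)) with hc
  have hb1 : ∀ σ : IConfig N, b1 N σ t = c * ∑ x : State N, Ifun N t x σ :=
    fun σ => rfl
  have hE : Qexp N γ (fun σ => b1 N σ t) = c * ∑ x : State N, pI N γ t x := by
    calc Qexp N γ (fun σ => b1 N σ t)
        = Qexp N γ (fun σ => c * ∑ x : State N, Ifun N t x σ) := by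
          simp only [hb1]
      _ = c * Qexp N γ (fun σ => ∑ x : State N, Ifun N t x σ) := Qexp_smul _ _
      _ = c * ∑ x : State N, pI N γ t x := by rw [Qexp_sum]; rfl
  have hdev : ∀ σ : IConfig N, b1 N σ t - Qexp N γ (fun σ => b1 N σ t)
      = c * ∑ x : State N, (Ifun N t x σ - pI N γ t x) := by
    intro σ
    rw [hE, hb1 σ, ← mul_sub, Finset.sum_sub_distrib]
  have hvar : Qvar N γ (fun σ => b1 N σ t)
      = c^2 * ∑ x : State N, ∑ x' : State N,
          Qexp N γ (fun σ => (Ifun N t x σ - pI N γ t x) *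
            (Ifun N t x' σ - pI N γ t x')) := by
    calc Qvar N γ (fun σ => b1 N σ t)
        = Qexp N γ (fun σ => c^2 * ∑ x : State N, ∑ x' : State N,
            (Ifun N t x σ - pI N γ t x) * (Ifun N t x' σ - pI N γ t x')) := by
          rw [Qvar]
          refine congrArg (Qexp N γ) (funext fun σ => ?_)
          have hS : (∑ x : State N, (Ifun N t x σ - pI N γ t x)) *
              (∑ x' : State N, (Ifun N t x' σ - pI N γ t x'))
              = ∑ x : State N, ∑ x' : State N,
                  (Ifun N t x σ - pI N γ t x) * (Ifun N t x' σ - pI N γ t x') :=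
            Finset.sum_mul_sum _ _ _ _
          rw [hdev σ, ← hS]
          ring
      _ = c^2 * ∑ x : State N, ∑ x' : State N,
            Qexp N γ (fun σ => (Ifun N t x σ - pI N γ t x) *
              (Ifun N t x' σ - pI N γ t x')) := by
          rw [Qexp_smul]
          congr 1
          rw [Qexp_sum]
          exact Finset.sum_congr rfl fun x _ => Qexp_sum _ _
  have hcov : ∀ x x' : State N,
      Qexp N γ (fun σ => (Ifun N t x σ - pI N γ t x) *
        (Ifun N t x' σ - pI N γ t x'))
      ≤ (if ring x = 0 ∧ ring x' = 0 ∧ x'.1.2 ∈ Sset x t (up x'.2)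
          then (1/4 : ℝ) else 0) := by
    intro x x'
    by_cases h1 : ring x = 0
    · by_cases h2 : ring x' = 0
      · by_cases h3 : Disjoint (win x t) (win x' t)
        · rw [cov_zero_of_disjoint t x x' h3]
          split <;> norm_num
        · rw [if_pos ⟨h1, h2, overlap_mem t x x' h3⟩]
          exact cov_le hγ0 hγ1 t x x'
      · rw [cov_zero_of_ring_right t x x' h2]
        split <;> norm_num
    · rw [cov_zero_of_ring_left t x x' h1]
      split <;> norm_num
  have hin : ∀ x : State N,
      (∑ x' : State N, if ring x = 0 ∧ ring x' = 0 ∧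
          x'.1.2 ∈ Sset x t (up x'.2) then (1/4 : ℝ) else 0)
      ≤ (if ring x = 0 then 2*(t:ℝ) else 0) := by
    intro x
    by_cases h : ring x = 0
    · rw [if_pos h]
      refine le_trans (le_of_eq (Finset.sum_congr rfl fun x' _ => ?_))
        (count_le t x)
      simp [h]
    · rw [if_neg h]
      refine le_of_eq (Finset.sum_eq_zero fun x' _ => if_neg (by tauto))
  have hout : (∑ x : State N, if ring x = 0 then 2*(t:ℝ) else 0)
      = (N:ℝ) * (8*t) := by
    rw [Fintype.sum_prod_type, Fintype.sum_prod_type]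
    have key : ∀ i : Fin 3, ∀ k : Fin N, (∑ v : Vel,
        if ring ((i,k),v) = 0 then 2*(t:ℝ) else 0)
        = (if i = 0 then 8*(t:ℝ) else 0) := by
      intro i k
      have hr : ∀ v : Vel, (if ring ((i,k),v) = 0 then 2*(t:ℝ) else 0)
          = (if i = 0 then 2*(t:ℝ) else 0) := fun v => rfl
      rw [Finset.sum_congr rfl (fun v _ => hr v), Finset.sum_const]
      have h4 : (Finset.univ : Finset Vel).card = 4 := by decide
      rw [h4]
      by_cases h : i = 0 <;> simp [h] <;> ring
    calc (∑ i : Fin 3, ∑ k : Fin N, ∑ v : Vel,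
          if ring ((i,k),v) = 0 then 2*(t:ℝ) else 0)
        = ∑ i : Fin 3, ∑ _k : Fin N, (if i = 0 then 8*(t:ℝ) else 0) := by
          exact Finset.sum_congr rfl fun i _ => Finset.sum_congr rfl
            fun k _ => key i k
      _ = (N:ℝ) * (8*t) := by
          simp [Finset.sum_const, Finset.card_univ, Fin.sum_univ_three,
            nsmul_eq_mul]
  have hne : (N:ℝ) ≠ 0 := ne_of_gt hNR
  have hstep : Qvar N γ (fun σ => b1 N σ t) ≤ c^2 * ((N:ℝ) * (8*t)) := by
    rw [hvar, ← hout]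
    refine mul_le_mul_of_nonneg_left ?_ (sq_nonneg c)
    refine Finset.sum_le_sum fun x _ => ?_
    exact le_trans (Finset.sum_le_sum fun x' _ => hcov x x') (hin x)
  have hval : c^2 * ((N:ℝ) * (8*t)) = (t:ℝ) / (2*(N:ℝ)) := by
    rw [hc]
    field_simp
    ring
  rw [hval] at hstep
  have hpos : (0:ℝ) ≤ 1 / (4*(N:ℝ)) := by positivity
  linarith

end Mirror
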